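/- Let n ≥ 2 and let f : Fin n → ℤ satisfy ∑_i f(i) = 0, and set N = ∑_i max(f(i), 0). Then for every subset S ⊆ Fin n, ∑_{i ∈ S, j ∉ S} max(−f(i)·f(j), 0) ≥ N · |∑_{i ∈ S} f(i)|. -/
import Mathlib

lemma max_neg_mul_eq (x y : ℤ) :
    max (-(x * y)) 0 = max x 0 * max (-y) 0 + max (-x) 0 * max y 0 := by
  rcases le_total x 0 with hx | hx <;> rcases le_total y 0 with hy | hy
  · rw [max_eq_right hx, max_eq_right hy, max_eq_left (neg_nonneg.mpr hx),
      max_eq_left (neg_nonneg.mpr hy), max_eq_right (neg_nonpos.mpr (by nlinarith : (0:ℤ) ≤ x * y))]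
    ring
  · rw [max_eq_right hx, max_eq_left hy, max_eq_left (neg_nonneg.mpr hx),
      max_eq_right (neg_nonpos.mpr hy), max_eq_left (neg_nonneg.mpr (mul_nonpos_of_nonpos_of_nonneg hx hy))]
    ring
  · rw [max_eq_left hx, max_eq_right hy, max_eq_right (neg_nonpos.mpr hx),
      max_eq_left (neg_nonneg.mpr hy), max_eq_left (neg_nonneg.mpr (mul_nonpos_of_nonneg_of_nonpos hx hy))]
    ring
  · rw [max_eq_left hx, max_eq_left hy, max_eq_right (neg_nonpos.mpr hx),
      max_eq_right (neg_nonpos.mpr hy), max_eq_right (neg_nonpos.mpr (mul_nonneg hx hy))]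
    ring

theorem statement_12 (n : ℕ) (hn : 2 ≤ n) (f : Fin n → ℤ)
    (hf : ∑ i, f i = 0) (S : Finset (Fin n)) :
    ∑ i ∈ S, ∑ j ∈ Sᶜ, max (-(f i * f j)) 0 ≥
      (∑ i, max (f i) 0) * |∑ i ∈ S, f i| := by
  set a := ∑ i ∈ S, max (f i) 0 with ha
  set b := ∑ i ∈ S, max (-f i) 0 with hb
  set c := ∑ i ∈ Sᶜ, max (f i) 0 with hc
  set d := ∑ i ∈ Sᶜ, max (-f i) 0 with hd
  have ha0 : 0 ≤ a := Finset.sum_nonneg fun i _ => le_max_right _ _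
  have hb0 : 0 ≤ b := Finset.sum_nonneg fun i _ => le_max_right _ _
  have hc0 : 0 ≤ c := Finset.sum_nonneg fun i _ => le_max_right _ _
  have hd0 : 0 ≤ d := Finset.sum_nonneg fun i _ => le_max_right _ _
  have hsplit : ∀ T : Finset (Fin n),
      ∑ i ∈ T, f i = (∑ i ∈ T, max (f i) 0) - ∑ i ∈ T, max (-f i) 0 := by
    intro T
    rw [← Finset.sum_sub_distrib]
    exact Finset.sum_congr rfl fun i _ => by rcases le_total (f i) 0 with h | h <;>
      simp [max_eq_left, max_eq_right, h, neg_nonneg.mpr, neg_nonpos.mpr] <;> omega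
  have hS : ∑ i ∈ S, f i = a - b := hsplit S
  have hN : (∑ i, max (f i) 0) = a + c := by
    rw [ha, hc, ← Finset.sum_add_sum_compl S]
  have htot : (a - b) + (c - d) = 0 := by
    rw [← hsplit S, ← hsplit Sᶜ, Finset.sum_add_sum_compl, hf]
  have hLHS : ∑ i ∈ S, ∑ j ∈ Sᶜ, max (-(f i * f j)) 0 = a * d + b * c := by
    have : ∀ i, ∑ j ∈ Sᶜ, max (-(f i * f j)) 0 = max (f i) 0 * d + max (-f i) 0 * c := by
      intro i
      rw [hd, hc, Finset.mul_sum, Finset.mul_sum, ← Finset.sum_add_distrib]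
      exact Finset.sum_congr rfl fun j _ => max_neg_mul_eq _ _
    rw [Finset.sum_congr rfl fun i _ => this i, Finset.sum_add_distrib,
      ← Finset.sum_mul, ← Finset.sum_mul]
  rw [hLHS, hN, hS, ge_iff_le]
  rcases abs_cases (a - b) with ⟨h1, h2⟩ | ⟨h1, h2⟩ <;> rw [h1] <;> nlinarith [mul_nonneg hb0 hc0, mul_nonneg ha0 hd0]
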